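/- Let h : ℝ → ℝ be differentiable, r > 0, k > 0, and suppose h(0) < 0 and the derivative satisfies d/dt (h(t) - r) ≥ -k·(h(t) - r) for all t ≥ 0. If t_f > 0 satisfies r ≥ (r - h(0))·exp(-k·t_f), then h(t_f) ≥ 0. -/

import Mathlib

theorem stmt1 (h : ℝ → ℝ) (hdiff : Differentiable ℝ h) (r k t_f : ℝ)
    (hr : 0 < r) (hk : 0 < k) (h0 : h 0 < 0)
    (hineq : ∀ t ≥ (0 : ℝ), deriv (fun t => h t - r) t ≥ -k * (h t - r))
    (htf : 0 < t_f) (hcond : r ≥ (r - h 0) * Real.exp (-k * t_f)) :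
    h t_f ≥ 0 := by
  set g : ℝ → ℝ := fun t => (h t - r) * Real.exp (k * t) with hg
  have hdiffg : Differentiable ℝ g := by
    apply Differentiable.mul
    · exact hdiff.sub_const r
    · exact Real.differentiable_exp.comp (differentiable_const k |>.mul differentiable_id)
  have hderiv : ∀ t ≥ (0:ℝ), 0 ≤ deriv g t := by
    intro t ht
    have h1 : HasDerivAt (fun t => h t - r) (deriv (fun t => h t - r) t) t :=
      ((hdiff t).sub_const r).hasDerivAt
    have h2 : HasDerivAt (fun t => Real.exp (k * t)) (k * Real.exp (k * t)) t := by
      have := (Real.hasDerivAt_exp (k * t)).comp t ((hasDerivAt_id t).const_mul k)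
      exact this.congr_deriv (by simp [mul_comm])
    have h3 : HasDerivAt g (deriv (fun t => h t - r) t * Real.exp (k * t)
        + (h t - r) * (k * Real.exp (k * t))) t := h1.mul h2
    rw [h3.deriv]
    have hkey := hineq t ht
    have hexp : 0 < Real.exp (k * t) := Real.exp_pos _
    nlinarith [hexp]
  have hmono : MonotoneOn g (Set.Ici (0:ℝ)) := by
    apply monotoneOn_of_deriv_nonneg (convex_Ici 0) hdiffg.continuous.continuousOn
      (fun t ht => (hdiffg t).differentiableWithinAt)
    intro t ht
    exact hderiv t (le_of_lt (by simpa using ht))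
  have hge : g 0 ≤ g t_f := hmono (Set.self_mem_Ici) (Set.mem_Ici.mpr htf.le) htf.le
  have hg0 : g 0 = h 0 - r := by simp [hg]
  have hexp : 0 < Real.exp (k * t_f) := Real.exp_pos _
  have : (h 0 - r) ≤ (h t_f - r) * Real.exp (k * t_f) := by
    rw [← hg0]; exact hge
  have hneg : Real.exp (-k * t_f) = (Real.exp (k * t_f))⁻¹ := by
    rw [← Real.exp_neg]; ring_nf
  rw [hneg] at hcond
  have hcancel : Real.exp (k * t_f) * (Real.exp (k * t_f))⁻¹ = 1 :=
    mul_inv_cancel₀ (ne_of_gt hexp)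
  nlinarith [hexp, mul_le_mul_of_nonneg_right hcond hexp.le]
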